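/- Let Ψ: G → K and Δ: K → H be right-resolving graph homomorphisms with Φ = Δ ∘ Ψ, where K = G/∼_Φ and Ψ is the quotient map for the stability relation ∼_Φ (so the fibers of ∂Ψ are exactly the ∼_Φ classes). Then Ψ is synchronizing and the stability relation ∼_Δ is trivial (equality). -/

import Mathlib

/-- A finite directed multigraph. -/
structure FinGraph where
  V : Type
  E : Type
  [fintV : Fintype V]
  [fintE : Fintype E]
  [decV : DecidableEq V]
  [decE : DecidableEq E]
  src : E → V
  tgt : E → V

attribute [instance] FinGraph.fintV FinGraph.fintE FinGraph.decV FinGraph.decE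

/-- A graph homomorphism. -/
structure GHom (G H : FinGraph) where
  eMap : G.E → H.E
  vMap : G.V → H.V
  src_eq : ∀ e, H.src (eMap e) = vMap (G.src e)
  tgt_eq : ∀ e, H.tgt (eMap e) = vMap (G.tgt e)

def GHom.comp {G K H : FinGraph} (Δ : GHom K H) (Ψ : GHom G K) : GHom G H where
  eMap := Δ.eMap ∘ Ψ.eMap
  vMap := Δ.vMap ∘ Ψ.vMap
  src_eq := fun e => by
    simp only [Function.comp_apply, Δ.src_eq, Ψ.src_eq]
  tgt_eq := fun e => by
    simp only [Function.comp_apply, Δ.tgt_eq, Ψ.tgt_eq]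

/-- The restriction of a homomorphism to the outgoing edges of a state. -/
def outMap {G H : FinGraph} (Φ : GHom G H) (I : G.V) :
    {e : G.E // G.src e = I} → {f : H.E // H.src f = Φ.vMap I} :=
  fun e => ⟨Φ.eMap e.1, (Φ.src_eq e.1).trans (congrArg Φ.vMap e.2)⟩

/-- A right-resolver: a surjective homomorphism restricting to a bijection
on the outgoing edges of each state. -/
def IsRR {G H : FinGraph} (Φ : GHom G H) : Prop :=
  Function.Surjective Φ.vMap ∧ ∀ I : G.V, Function.Bijective (outMap Φ I)

/-- `IsPathFrom H I u`: the edge list `u` is a path in `H` starting at `I`. -/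
def IsPathFrom (H : FinGraph) : H.V → List H.E → Prop
  | _, [] => True
  | I, e :: u => H.src e = I ∧ IsPathFrom H (H.tgt e) u

/-- The terminal state of a path starting at `I`. -/
def pathEnd (H : FinGraph) (I : H.V) (u : List H.E) : H.V :=
  u.foldl (fun _ e => H.tgt e) I

/-- One-step transition: `I · a` is the target of the unique edge at `I`
lifting `a` (when `Φ` is right-resolving and `a` starts at the image of `I`). -/
noncomputable def step {G H : FinGraph} (Φ : GHom G H) (I : G.V) (a : H.E) : G.V :=
  if h : ∃ e : G.E, G.src e = I ∧ Φ.eMap e = a then G.tgt h.choose else I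

/-- Transition along a word: `I · u`. -/
noncomputable def transPath {G H : FinGraph} (Φ : GHom G H) (I : G.V) (u : List H.E) : G.V :=
  u.foldl (step Φ) I

/-- The stability relation of a right-resolver. -/
def Stable {G H : FinGraph} (Φ : GHom G H) (I₁ I₂ : G.V) : Prop :=
  Φ.vMap I₁ = Φ.vMap I₂ ∧
  ∀ u : List H.E, IsPathFrom H (Φ.vMap I₁) u →
    ∃ v : List H.E, IsPathFrom H (pathEnd H (Φ.vMap I₁) u) v ∧
      transPath Φ I₁ (u ++ v) = transPath Φ I₂ (u ++ v)

/-- A right-resolver is synchronizing if each fiber of its state map is a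
single stability class. -/
def Synchronizing {G H : FinGraph} (Φ : GHom G H) : Prop :=
  ∀ I₁ I₂ : G.V, Φ.vMap I₁ = Φ.vMap I₂ → Stable Φ I₁ I₂

/-- The fiber of the state map over a state of the codomain. -/
def fiber {G H : FinGraph} (Φ : GHom G H) (I : H.V) : Set G.V := {J | Φ.vMap J = I}

/-- The image `U · u` of a set of states under transition along a word. -/
noncomputable def setTrans {G H : FinGraph} (Φ : GHom G H) (U : Set G.V)
    (u : List H.E) : Set G.V :=
  (fun J => transPath Φ J u) '' U

/-- A minimal image of a right-resolver. -/
def IsMinImage {G H : FinGraph} (Φ : GHom G H) (U : Set G.V) : Prop :=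
  ∃ (I : H.V) (u : List H.E), IsPathFrom H I u ∧ U = setTrans Φ (fiber Φ I) u ∧
    ∀ v : List H.E, IsPathFrom H (pathEnd H I u) v →
      (setTrans Φ U v).ncard = U.ncard

/-- Strong connectedness: a directed path between every ordered pair of states. -/
def StronglyConnected (G : FinGraph) : Prop :=
  ∀ I J : G.V, ∃ u : List G.E, IsPathFrom G I u ∧ pathEnd G I u = J

section Aux

variable {G K H : FinGraph}

lemma transPath_append' (Φ : GHom G H) (I : G.V) (u v : List H.E) :
    transPath Φ I (u ++ v) = transPath Φ (transPath Φ I u) v :=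
  List.foldl_append

lemma pathEnd_append' (H : FinGraph) (I : H.V) (u v : List H.E) :
    pathEnd H I (u ++ v) = pathEnd H (pathEnd H I u) v :=
  List.foldl_append

lemma isPathFrom_append (H : FinGraph) : ∀ (u : List H.E) (I : H.V) (v : List H.E),
    IsPathFrom H I (u ++ v) ↔ IsPathFrom H I u ∧ IsPathFrom H (pathEnd H I u) v := by
  intro u
  induction u with
  | nil => intro I v; simp [IsPathFrom, pathEnd]
  | cons e u ih =>
      intro I v
      show (H.src e = I ∧ IsPathFrom H (H.tgt e) (u ++ v)) ↔ _
      rw [ih]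
      constructor
      · rintro ⟨h1, h2, h3⟩; exact ⟨⟨h1, h2⟩, h3⟩
      · rintro ⟨⟨h1, h2⟩, h3⟩; exact ⟨h1, h2, h3⟩

lemma exists_lift {Φ : GHom G H} (hΦ : ∀ I, Function.Bijective (outMap Φ I))
    {I : G.V} {a : H.E} (ha : H.src a = Φ.vMap I) :
    ∃ g, G.src g = I ∧ Φ.eMap g = a := by
  obtain ⟨⟨g, hg⟩, h⟩ := (hΦ I).2 ⟨a, ha⟩
  exact ⟨g, hg, congrArg Subtype.val h⟩

lemma step_eq_tgt {Φ : GHom G H} (hΦ : ∀ I, Function.Bijective (outMap Φ I))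
    {I : G.V} {g : G.E} {a : H.E} (hg : G.src g = I) (ha : Φ.eMap g = a) :
    step Φ I a = G.tgt g := by
  have hex : ∃ e, G.src e = I ∧ Φ.eMap e = a := ⟨g, hg, ha⟩
  rw [step, dif_pos hex]
  obtain ⟨h1, h2⟩ := hex.choose_spec
  have : (⟨hex.choose, h1⟩ : {e : G.E // G.src e = I}) = ⟨g, hg⟩ := by
    apply (hΦ I).1
    apply Subtype.ext
    show Φ.eMap _ = Φ.eMap g
    rw [h2, ha]
  exact congrArg G.tgt (congrArg Subtype.val this)

lemma vMap_step {Φ : GHom G H} (hΦ : ∀ I, Function.Bijective (outMap Φ I))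
    {I : G.V} {a : H.E} (ha : H.src a = Φ.vMap I) :
    Φ.vMap (step Φ I a) = H.tgt a := by
  obtain ⟨g, hg, hge⟩ := exists_lift hΦ ha
  rw [step_eq_tgt hΦ hg hge, ← Φ.tgt_eq, hge]

lemma vMap_transPath {Φ : GHom G H} (hΦ : ∀ I, Function.Bijective (outMap Φ I)) :
    ∀ (u : List H.E) (I : G.V), IsPathFrom H (Φ.vMap I) u →
      Φ.vMap (transPath Φ I u) = pathEnd H (Φ.vMap I) u := by
  intro u
  induction u with
  | nil => intro I _; rfl
  | cons a u ih =>
      rintro I ⟨h1, h2⟩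
      show Φ.vMap (transPath Φ (step Φ I a) u) = pathEnd H (H.tgt a) u
      have hv : Φ.vMap (step Φ I a) = H.tgt a := vMap_step hΦ h1
      rw [← hv] at h2 ⊢
      exact ih _ h2

lemma outMap_comp (Δ : GHom K H) (Ψ : GHom G K) (I : G.V) :
    outMap (Δ.comp Ψ) I = outMap Δ (Ψ.vMap I) ∘ outMap Ψ I := by
  funext e; apply Subtype.ext; rfl

lemma comp_bij {Δ : GHom K H} {Ψ : GHom G K}
    (hΨ : ∀ I, Function.Bijective (outMap Ψ I))
    (hΔ : ∀ J, Function.Bijective (outMap Δ J)) :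
    ∀ I, Function.Bijective (outMap (Δ.comp Ψ) I) := by
  intro I
  rw [outMap_comp]
  exact (hΔ _).comp (hΨ I)

lemma step_comp {Δ : GHom K H} {Ψ : GHom G K}
    (hΨ : ∀ I, Function.Bijective (outMap Ψ I))
    (hΔ : ∀ J, Function.Bijective (outMap Δ J))
    {I : G.V} {e : K.E} (he : K.src e = Ψ.vMap I) :
    step Ψ I e = step (Δ.comp Ψ) I (Δ.eMap e) := by
  obtain ⟨g, hg, hge⟩ := exists_lift hΨ he
  rw [step_eq_tgt hΨ hg hge,
    step_eq_tgt (comp_bij hΨ hΔ) hg (show (Δ.comp Ψ).eMap g = Δ.eMap e from by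
      show Δ.eMap (Ψ.eMap g) = Δ.eMap e
      rw [hge])]

lemma transPath_comp {Δ : GHom K H} {Ψ : GHom G K}
    (hΨ : ∀ I, Function.Bijective (outMap Ψ I))
    (hΔ : ∀ J, Function.Bijective (outMap Δ J)) :
    ∀ (w : List K.E) (I : G.V), IsPathFrom K (Ψ.vMap I) w →
      transPath Ψ I w = transPath (Δ.comp Ψ) I (w.map Δ.eMap) := by
  intro w
  induction w with
  | nil => intro I _; rfl
  | cons e w ih =>
      rintro I ⟨h1, h2⟩
      show transPath Ψ (step Ψ I e) w
        = transPath (Δ.comp Ψ) (step (Δ.comp Ψ) I (Δ.eMap e)) (w.map Δ.eMap)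
      rw [← step_comp hΨ hΔ h1]
      have hv : Ψ.vMap (step Ψ I e) = K.tgt e := vMap_step hΨ h1
      rw [← hv] at h2
      exact ih _ h2

lemma vMap_transPath_comp {Δ : GHom K H} {Ψ : GHom G K}
    (hΨ : ∀ I, Function.Bijective (outMap Ψ I))
    (hΔ : ∀ J, Function.Bijective (outMap Δ J)) :
    ∀ (u : List H.E) (I : G.V), IsPathFrom H (Δ.vMap (Ψ.vMap I)) u →
      Ψ.vMap (transPath (Δ.comp Ψ) I u) = transPath Δ (Ψ.vMap I) u := by
  intro u
  induction u with
  | nil => intro I _; rfl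
  | cons a u ih =>
      rintro I ⟨h1, h2⟩
      obtain ⟨g, hg, hge⟩ := exists_lift (comp_bij hΨ hΔ)
        (show H.src a = (Δ.comp Ψ).vMap I from h1)
      have hge' : Δ.eMap (Ψ.eMap g) = a := hge
      show Ψ.vMap (transPath (Δ.comp Ψ) (step (Δ.comp Ψ) I a) u)
        = transPath Δ (step Δ (Ψ.vMap I) a) u
      have hstepG : step (Δ.comp Ψ) I a = G.tgt g := step_eq_tgt (comp_bij hΨ hΔ) hg hge
      have hsrcΨ : K.src (Ψ.eMap g) = Ψ.vMap I := by rw [Ψ.src_eq, hg]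
      have hstepK : step Δ (Ψ.vMap I) a = K.tgt (Ψ.eMap g) := step_eq_tgt hΔ hsrcΨ hge'
      have hΨtgt : Ψ.vMap (G.tgt g) = K.tgt (Ψ.eMap g) := (Ψ.tgt_eq g).symm
      rw [hstepG, hstepK, ← hΨtgt]
      apply ih
      show IsPathFrom H (Δ.vMap (Ψ.vMap (G.tgt g))) u
      have : Δ.vMap (Ψ.vMap (G.tgt g)) = H.tgt a := by
        rw [hΨtgt, ← Δ.tgt_eq, hge']
      rw [this]
      exact h2

lemma pathEnd_map (Δ : GHom K H) :
    ∀ (w : List K.E) (K₀ : K.V),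
      pathEnd H (Δ.vMap K₀) (w.map Δ.eMap) = Δ.vMap (pathEnd K K₀ w) := by
  intro w
  induction w with
  | nil => intro K₀; rfl
  | cons e w ih =>
      intro K₀
      show pathEnd H (H.tgt (Δ.eMap e)) (w.map Δ.eMap) = Δ.vMap (pathEnd K (K.tgt e) w)
      rw [Δ.tgt_eq]
      exact ih _

lemma isPathFrom_map (Δ : GHom K H) :
    ∀ (w : List K.E) (K₀ : K.V), IsPathFrom K K₀ w →
      IsPathFrom H (Δ.vMap K₀) (w.map Δ.eMap) := by
  intro w
  induction w with
  | nil => intro K₀ _; trivial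
  | cons e w ih =>
      rintro K₀ ⟨h1, h2⟩
      refine ⟨by rw [Δ.src_eq, h1], ?_⟩
      show IsPathFrom H (H.tgt (Δ.eMap e)) (w.map Δ.eMap)
      rw [Δ.tgt_eq]
      exact ih _ h2

lemma lift_path {Δ : GHom K H} (hΔ : ∀ J, Function.Bijective (outMap Δ J)) :
    ∀ (u : List H.E) (K₀ : K.V), IsPathFrom H (Δ.vMap K₀) u →
      ∃ w, IsPathFrom K K₀ w ∧ w.map Δ.eMap = u := by
  intro u
  induction u with
  | nil => intro K₀ _; exact ⟨[], trivial, rfl⟩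
  | cons a u ih =>
      rintro K₀ ⟨h1, h2⟩
      obtain ⟨f, hf, hfa⟩ := exists_lift hΔ h1
      have : IsPathFrom H (Δ.vMap (K.tgt f)) u := by
        rw [← Δ.tgt_eq, hfa]; exact h2
      obtain ⟨w, hw1, hw2⟩ := ih (K.tgt f) this
      exact ⟨f :: w, ⟨hf, hw1⟩, by simp [hw2, hfa]⟩

end Aux

/-- if the fibers of Ψ are exactly the stability classes of
Φ = Δ ∘ Ψ (i.e. Ψ is the quotient map by ∼_Φ), then Ψ is synchronizing and
the stability relation of Δ is trivial. -/
theorem quotient_sync_and_triv {G K H : FinGraph} (Ψ : GHom G K) (Δ : GHom K H)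
    (hΨ : IsRR Ψ) (hΔ : IsRR Δ)
    (hquot : ∀ I₁ I₂ : G.V, Ψ.vMap I₁ = Ψ.vMap I₂ ↔ Stable (Δ.comp Ψ) I₁ I₂) :
    Synchronizing Ψ ∧ ∀ K₁ K₂ : K.V, Stable Δ K₁ K₂ → K₁ = K₂ := by
  set Φ := Δ.comp Ψ with hΦdef
  have hΦbij : ∀ I, Function.Bijective (outMap Φ I) := comp_bij hΨ.2 hΔ.2
  constructor
  · -- Ψ is synchronizing
    intro I₁ I₂ h
    have hst : Stable Φ I₁ I₂ := (hquot I₁ I₂).mp h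
    refine ⟨h, ?_⟩
    intro w hw
    have hu : IsPathFrom H (Φ.vMap I₁) (w.map Δ.eMap) :=
      isPathFrom_map Δ w (Ψ.vMap I₁) hw
    obtain ⟨v, hv, heq⟩ := hst.2 (w.map Δ.eMap) hu
    -- lift v to K at the end of w
    have hΔend : Δ.vMap (pathEnd K (Ψ.vMap I₁) w) = pathEnd H (Φ.vMap I₁) (w.map Δ.eMap) :=
      (pathEnd_map Δ w (Ψ.vMap I₁)).symm
    obtain ⟨w', hw'1, hw'2⟩ := lift_path hΔ.2 v (pathEnd K (Ψ.vMap I₁) w) (by rw [hΔend]; exact hv)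
    refine ⟨w', hw'1, ?_⟩
    have hpath : IsPathFrom K (Ψ.vMap I₁) (w ++ w') :=
      (isPathFrom_append K w (Ψ.vMap I₁) w').mpr ⟨hw, hw'1⟩
    have hpath2 : IsPathFrom K (Ψ.vMap I₂) (w ++ w') := by rw [← h]; exact hpath
    have hmap : (w ++ w').map Δ.eMap = w.map Δ.eMap ++ v := by
      rw [List.map_append, hw'2]
    rw [transPath_comp hΨ.2 hΔ.2 _ _ hpath, transPath_comp hΨ.2 hΔ.2 _ _ hpath2, hmap]
    exact heq
  · -- stability relation of Δ is trivial
    intro K₁ K₂ hst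
    obtain ⟨I₁, hI₁⟩ := hΨ.1 K₁
    obtain ⟨I₂, hI₂⟩ := hΨ.1 K₂
    have hΦ1 : Φ.vMap I₁ = Δ.vMap K₁ := by show Δ.vMap (Ψ.vMap I₁) = _; rw [hI₁]
    have hΦ2 : Φ.vMap I₂ = Δ.vMap K₂ := by show Δ.vMap (Ψ.vMap I₂) = _; rw [hI₂]
    have hveq : Φ.vMap I₁ = Φ.vMap I₂ := by rw [hΦ1, hΦ2, hst.1]
    suffices hS : Stable Φ I₁ I₂ by
      rw [← hI₁, ← hI₂]
      exact (hquot I₁ I₂).mpr hS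
    refine ⟨hveq, ?_⟩
    intro u hu
    obtain ⟨v, hv, heqΔ⟩ := hst.2 u (by rwa [hΦ1] at hu)
    -- hv : IsPathFrom H (pathEnd H (Δ.vMap K₁) u) v
    have hpath1 : IsPathFrom H (Φ.vMap I₁) (u ++ v) := by
      rw [isPathFrom_append]
      exact ⟨hu, by rwa [hΦ1]⟩
    have hpath2 : IsPathFrom H (Φ.vMap I₂) (u ++ v) := by rw [← hveq]; exact hpath1
    set I₁' := transPath Φ I₁ (u ++ v) with hI₁'
    set I₂' := transPath Φ I₂ (u ++ v) with hI₂'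
    have hm1 : Ψ.vMap I₁' = transPath Δ K₁ (u ++ v) := by
      rw [hI₁', vMap_transPath_comp hΨ.2 hΔ.2 _ _ (by rwa [show Δ.vMap (Ψ.vMap I₁) = Φ.vMap I₁ from rfl]), hI₁]
    have hm2 : Ψ.vMap I₂' = transPath Δ K₂ (u ++ v) := by
      rw [hI₂', vMap_transPath_comp hΨ.2 hΔ.2 _ _ (by rwa [show Δ.vMap (Ψ.vMap I₂) = Φ.vMap I₂ from rfl]), hI₂]
    have hΨeq : Ψ.vMap I₁' = Ψ.vMap I₂' := by rw [hm1, hm2, heqΔ]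
    have hS' : Stable Φ I₁' I₂' := (hquot I₁' I₂').mp hΨeq
    obtain ⟨v', hv', heq'⟩ := hS'.2 [] trivial
    -- heq' : transPath Φ I₁' ([] ++ v') = transPath Φ I₂' ([] ++ v')
    have hend1 : Φ.vMap I₁' = pathEnd H (Φ.vMap I₁) (u ++ v) :=
      vMap_transPath hΦbij (u ++ v) I₁ hpath1
    refine ⟨v ++ v', ?_, ?_⟩
    · rw [isPathFrom_append]
      refine ⟨by rwa [hΦ1], ?_⟩
      rw [← pathEnd_append', ← hend1]
      simpa [pathEnd] using hv'
    · have h1 : transPath Φ I₁ (u ++ (v ++ v')) = transPath Φ I₁' v' := by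
        rw [show u ++ (v ++ v') = (u ++ v) ++ v' from (List.append_assoc u v v').symm,
          transPath_append', ← hI₁']
      have h2 : transPath Φ I₂ (u ++ (v ++ v')) = transPath Φ I₂' v' := by
        rw [show u ++ (v ++ v') = (u ++ v) ++ v' from (List.append_assoc u v v').symm,
          transPath_append', ← hI₂']
      rw [h1, h2]
      simpa using heq'
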